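/- Recurrence rule for w_{𝔰𝔬(N)} (summed form): let m ≥ 2, let s be a permutation of Fin m, let r, r' : Fin m be positions with (r' : ℕ) = (r : ℕ) + 1, and let τ := Equiv.swap r r'. Then w_{𝔰𝔬(N)}(s) = w_{𝔰𝔬(N)}(τ * s * τ) + A − B − C + D in U(𝔰𝔬(N)), where: A := ∑ over i : Fin m → Fin N with i r' = i (s r) of the ordered product over positions k of factors f k with f r' := 1, f r := ι(X (i r) (i (s r'))), and f k := ι(X (i k) (i (s k))) otherwise; B := ∑ over i with i r = i (s r') of the ordered product with g r := 1, g r' := ι(X (i r') (i (s r))), and g k := ι(X (i k) (i (s k))) otherwise; C := ∑ over i with Fin.rev (i (s r')) = i (s r) of the ordered product with h r' := 1, h r := ι(X (i r) (Fin.rev (i r'))), and h k := ι(X (i k) (i (s k))) otherwise; D := ∑ over i with i r = Fin.rev (i r') of the ordered product with p r := 1, p r' := ι(X (Fin.rev (i (s r'))) (i (s r))), and p k := ι(X (i k) (i (s k))) otherwise. -/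

import Mathlib

open Matrix in
noncomputable section
open Matrix

attribute [local instance 100] LieRing.ofAssociativeRing

/-- The anti-diagonal identity matrix. -/
def soJ (N : ℕ) : Matrix (Fin N) (Fin N) ℂ := fun i j => if j = Fin.rev i then 1 else 0

lemma soJ_mul (N : ℕ) (A : Matrix (Fin N) (Fin N) ℂ) (i j : Fin N) :
    (soJ N * A) i j = A (Fin.rev i) j := by
  simp [soJ, Matrix.mul_apply, Fin.rev_eq_iff]

lemma mul_soJ (N : ℕ) (A : Matrix (Fin N) (Fin N) ℂ) (i j : Fin N) :
    (A * soJ N) i j = A i (Fin.rev j) := by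
  classical
  simp only [Matrix.mul_apply, soJ]
  rw [Finset.sum_eq_single (Fin.rev j)]
  · simp
  · intro b _ hb
    rw [if_neg, mul_zero]
    intro h
    exact hb (by rw [h, Fin.rev_rev])
  · simp

/-- The Lie algebra 𝔰𝔬(N). -/
def soL (N : ℕ) : LieSubalgebra ℂ (Matrix (Fin N) (Fin N) ℂ) where
  carrier := {A | Aᵀ * soJ N = -(soJ N * A)}
  add_mem' := by
    intro A B hA hB
    simp only [Set.mem_setOf_eq] at *
    rw [Matrix.transpose_add, Matrix.add_mul, hA, hB, Matrix.mul_add, neg_add]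
  zero_mem' := by
    simp [Set.mem_setOf_eq]
  smul_mem' := by
    intro c A hA
    simp only [Set.mem_setOf_eq] at *
    rw [Matrix.transpose_smul, Matrix.smul_mul, hA, Matrix.mul_smul, smul_neg]
  lie_mem' := by
    intro A B hA hB
    simp only [Set.mem_setOf_eq] at *
    rw [Ring.lie_def, Matrix.transpose_sub, Matrix.transpose_mul, Matrix.transpose_mul,
      Matrix.sub_mul, Matrix.mul_assoc, Matrix.mul_assoc, hA, hB, Matrix.mul_neg,
      Matrix.mul_neg, ← Matrix.mul_assoc, ← Matrix.mul_assoc, hA, hB, Matrix.neg_mul,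
      Matrix.neg_mul, neg_neg, neg_neg, Matrix.mul_sub, Matrix.mul_assoc, Matrix.mul_assoc]
    abel

/-- The generators X_{ab} of 𝔰𝔬(N), as matrices. -/
def soXmat (N : ℕ) (a b : Fin N) : Matrix (Fin N) (Fin N) ℂ :=
  Matrix.single a b 1 - Matrix.single (Fin.rev b) (Fin.rev a) 1

lemma soXmat_mem (N : ℕ) (a b : Fin N) : soXmat N a b ∈ soL N := by
  change (soXmat N a b)ᵀ * soJ N = -(soJ N * soXmat N a b)
  ext i j
  rw [mul_soJ]
  simp only [Matrix.neg_apply, soJ_mul, soXmat, Matrix.sub_apply, Matrix.transpose_apply,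
    Matrix.single_apply]
  simp only [Fin.rev_inj, Fin.rev_eq_iff, neg_sub]
  simp [and_comm]

/-- The generators of 𝔰𝔬(N) as elements of the Lie algebra. -/
def soX (N : ℕ) (a b : Fin N) : soL N := ⟨soXmat N a b, soXmat_mem N a b⟩

/-- The extension of the 𝔰𝔬(N) weight system to permutations. -/
def wso (N : ℕ) {m : ℕ} (s : Equiv.Perm (Fin m)) :
    UniversalEnvelopingAlgebra ℂ ↥(soL N) :=
  ∑ i : Fin m → Fin N,
    (List.ofFn fun k : Fin m =>
      UniversalEnvelopingAlgebra.ι ℂ (soX N (i k) (i (s k)))).prod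


section ListAux

lemma ofFn_prod_split {M : Type*} [Monoid M] {m : ℕ} (f : Fin m → M) (n : ℕ) (h : n + 1 < m) :
    (List.ofFn f).prod =
      ((List.ofFn f).take n).prod * f ⟨n, by omega⟩ * f ⟨n+1, h⟩ *
        ((List.ofFn f).drop (n+2)).prod := by
  conv_lhs => rw [← List.take_append_drop n (List.ofFn f)]
  rw [List.prod_append,
    List.drop_eq_getElem_cons (l := List.ofFn f) (by simp; omega),
    List.drop_eq_getElem_cons (l := List.ofFn f) (by simp; omega)]
  simp [List.getElem_ofFn, mul_assoc]

lemma ofFn_take_congr {M : Type*} {m : ℕ} (f g : Fin m → M) (n : ℕ)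
    (h : ∀ k : Fin m, (k:ℕ) < n → f k = g k) :
    (List.ofFn f).take n = (List.ofFn g).take n := by
  apply List.ext_getElem (by simp)
  intro j h1 h2
  simp only [List.getElem_take, List.getElem_ofFn]
  exact h _ (show j < n by simp at h1; omega)

lemma ofFn_drop_congr {M : Type*} {m : ℕ} (f g : Fin m → M) (n : ℕ)
    (h : ∀ k : Fin m, n ≤ (k:ℕ) → f k = g k) :
    (List.ofFn f).drop n = (List.ofFn g).drop n := by
  apply List.ext_getElem (by simp)
  intro j h1 h2
  simp only [List.getElem_drop, List.getElem_ofFn]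
  exact h _ (show n ≤ n + j by omega)

lemma prod_split_agree {M : Type*} [Monoid M] {m : ℕ} (f g : Fin m → M) (r r' : Fin m)
    (hr : (r':ℕ) = (r:ℕ) + 1) (hfg : ∀ k, k ≠ r → k ≠ r' → f k = g k) :
    (List.ofFn f).prod =
      ((List.ofFn g).take (r:ℕ)).prod * f r * f r' * ((List.ofFn g).drop ((r:ℕ)+2)).prod := by
  have h1 : (r:ℕ)+1 < m := hr ▸ r'.isLt
  have e1 : (⟨(r:ℕ), by omega⟩ : Fin m) = r := Fin.eta r _
  have e2 : (⟨(r:ℕ)+1, h1⟩ : Fin m) = r' := Fin.ext hr.symm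
  rw [ofFn_prod_split f r h1, e1, e2, ofFn_take_congr f g _ ?_, ofFn_drop_congr f g _ ?_]
  · intro k hk
    apply hfg k <;> rintro rfl <;> omega
  · intro k hk
    apply hfg k <;> rintro rfl <;> omega

lemma prod_update {M : Type*} [Monoid M] {m : ℕ} (r r' : Fin m)
    (hr : (r':ℕ) = (r:ℕ) + 1) (f : Fin m → M) (x y : M) :
    (List.ofFn fun k => if k = r then x else if k = r' then y else f k).prod =
      ((List.ofFn f).take (r:ℕ)).prod * x * y * ((List.ofFn f).drop ((r:ℕ)+2)).prod := by
  have hne : r ≠ r' := by intro e; rw [e] at hr; omega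
  rw [prod_split_agree _ f r r' hr (fun k h1 h2 => by simp [h1, h2])]
  simp [hne, hne.symm]

end ListAux

section BracketAux

lemma stdE_mul {N : ℕ} (a b c d : Fin N) :
    Matrix.single a b (1:ℂ) * Matrix.single c d 1 =
      if b = c then Matrix.single a d 1 else 0 := by
  split_ifs with h
  · subst h
    rw [Matrix.single_mul_single_same, one_mul]
  · exact Matrix.single_mul_single_of_ne _ _ _ _ h _

lemma soXmat_mul {N : ℕ} (a b c d : Fin N) : soXmat N a b * soXmat N c d =
      (if b = c then Matrix.single a d (1:ℂ) else 0)
    - (if b = Fin.rev d then Matrix.single a (Fin.rev c) 1 else 0)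
    - (if a = Fin.rev c then Matrix.single (Fin.rev b) d 1 else 0)
    + (if a = d then Matrix.single (Fin.rev b) (Fin.rev c) 1 else 0) := by
  simp only [soXmat, Matrix.sub_mul, Matrix.mul_sub, stdE_mul, Fin.rev_rev, Fin.rev_eq_iff,
    Fin.rev_inj]
  abel

lemma soXmat_bracket {N : ℕ} (a b c d : Fin N) :
    soXmat N a b * soXmat N c d - soXmat N c d * soXmat N a b =
      (if b = c then soXmat N a d else 0)
    - (if a = d then soXmat N c b else 0)
    - (if b = Fin.rev d then soXmat N a (Fin.rev c) else 0)
    + (if a = Fin.rev c then soXmat N (Fin.rev d) b else 0) := by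
  have hite : ∀ (P : Prop) [Decidable P] (x y : Fin N),
      (if P then soXmat N x y else 0) =
        (if P then Matrix.single x y (1:ℂ) else 0)
          - (if P then Matrix.single (Fin.rev y) (Fin.rev x) 1 else 0) := by
    intro P _ x y
    split <;> simp [soXmat]
  rw [soXmat_mul, soXmat_mul, hite, hite, hite, hite]
  simp only [show (d = a) ↔ (a = d) from eq_comm,
    show (d = Fin.rev b) ↔ (b = Fin.rev d) by rw [eq_comm, Fin.rev_eq_iff],
    show (c = Fin.rev a) ↔ (a = Fin.rev c) by rw [eq_comm, Fin.rev_eq_iff],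
    show (c = b) ↔ (b = c) from eq_comm, Fin.rev_rev]
  abel

lemma soX_bracket (N : ℕ) (a b c d : Fin N) :
    ⁅soX N a b, soX N c d⁆ =
      (if b = c then soX N a d else 0)
    - (if a = d then soX N c b else 0)
    - (if b = Fin.rev d then soX N a (Fin.rev c) else 0)
    + (if a = Fin.rev c then soX N (Fin.rev d) b else 0) := by
  apply Subtype.ext
  have lhs : ((⁅soX N a b, soX N c d⁆ : soL N) : Matrix (Fin N) (Fin N) ℂ) =
      soXmat N a b * soXmat N c d - soXmat N c d * soXmat N a b := rfl
  rw [lhs, soXmat_bracket]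
  have hco : ∀ (P : Prop) [Decidable P] (x y : Fin N),
      (((if P then soX N x y else 0) : soL N) : Matrix (Fin N) (Fin N) ℂ) =
        (if P then soXmat N x y else 0) := by
    intro P _ x y
    split <;> rfl
  push_cast [hco]
  rfl

lemma iota_bracket (N : ℕ) (a b c d : Fin N) :
    UniversalEnvelopingAlgebra.ι ℂ (soX N a b) * UniversalEnvelopingAlgebra.ι ℂ (soX N c d)
      - UniversalEnvelopingAlgebra.ι ℂ (soX N c d) * UniversalEnvelopingAlgebra.ι ℂ (soX N a b)
    = (if b = c then UniversalEnvelopingAlgebra.ι ℂ (soX N a d) else 0)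
    - (if a = d then UniversalEnvelopingAlgebra.ι ℂ (soX N c b) else 0)
    - (if b = Fin.rev d then UniversalEnvelopingAlgebra.ι ℂ (soX N a (Fin.rev c)) else 0)
    + (if a = Fin.rev c then UniversalEnvelopingAlgebra.ι ℂ (soX N (Fin.rev d) b) else 0) := by
  have h := (UniversalEnvelopingAlgebra.ι ℂ (L := ↥(soL N))).map_lie
    (x := soX N a b) (y := soX N c d)
  rw [Ring.lie_def] at h
  rw [← h, soX_bracket]
  have hite : ∀ (P : Prop) [Decidable P] (x y : Fin N),
      UniversalEnvelopingAlgebra.ι ℂ (if P then soX N x y else 0) =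
        (if P then UniversalEnvelopingAlgebra.ι ℂ (soX N x y) else 0) := by
    intro P _ x y
    split
    · rfl
    · exact map_zero _
  rw [map_add, map_sub, map_sub, hite, hite, hite, hite]

end BracketAux

set_option maxHeartbeats 1600000 in
/-- The recurrence rule for w_{𝔰𝔬(N)}, in summed form. -/
theorem wso_recurrence (N m : ℕ) (hm : 2 ≤ m) (s : Equiv.Perm (Fin m)) (r r' : Fin m)
    (hr : (r' : ℕ) = (r : ℕ) + 1) :
    wso N s =
      wso N (Equiv.swap r r' * s * Equiv.swap r r') +
        (∑ i : Fin m → Fin N,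
          if i r' = i (s r) then
            (List.ofFn fun k : Fin m =>
              if k = r' then (1 : UniversalEnvelopingAlgebra ℂ ↥(soL N))
              else if k = r then UniversalEnvelopingAlgebra.ι ℂ (soX N (i r) (i (s r')))
              else UniversalEnvelopingAlgebra.ι ℂ (soX N (i k) (i (s k)))).prod
          else 0) -
        (∑ i : Fin m → Fin N,
          if i r = i (s r') then
            (List.ofFn fun k : Fin m =>
              if k = r then (1 : UniversalEnvelopingAlgebra ℂ ↥(soL N))
              else if k = r' then UniversalEnvelopingAlgebra.ι ℂ (soX N (i r') (i (s r)))
              else UniversalEnvelopingAlgebra.ι ℂ (soX N (i k) (i (s k)))).prod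
          else 0) -
        (∑ i : Fin m → Fin N,
          if Fin.rev (i (s r')) = i (s r) then
            (List.ofFn fun k : Fin m =>
              if k = r' then (1 : UniversalEnvelopingAlgebra ℂ ↥(soL N))
              else if k = r then
                UniversalEnvelopingAlgebra.ι ℂ (soX N (i r) (Fin.rev (i r')))
              else UniversalEnvelopingAlgebra.ι ℂ (soX N (i k) (i (s k)))).prod
          else 0) +
        (∑ i : Fin m → Fin N,
          if i r = Fin.rev (i r') then
            (List.ofFn fun k : Fin m =>
              if k = r then (1 : UniversalEnvelopingAlgebra ℂ ↥(soL N))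
              else if k = r' then
                UniversalEnvelopingAlgebra.ι ℂ (soX N (Fin.rev (i (s r'))) (i (s r)))
              else UniversalEnvelopingAlgebra.ι ℂ (soX N (i k) (i (s k)))).prod
          else 0) := by
  classical
  have hlt : (r:ℕ) + 1 < m := hr ▸ r'.isLt
  have hne : r ≠ r' := fun e => by rw [e] at hr; omega
  set T : (Fin m → Fin N) → UniversalEnvelopingAlgebra ℂ ↥(soL N) := fun i =>
    ((List.ofFn fun k => UniversalEnvelopingAlgebra.ι ℂ (soX N (i k) (i (s k)))).take
      (r:ℕ)).prod with hT
  set Dd : (Fin m → Fin N) → UniversalEnvelopingAlgebra ℂ ↥(soL N) := fun i =>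
    ((List.ofFn fun k => UniversalEnvelopingAlgebra.ι ℂ (soX N (i k) (i (s k)))).drop
      ((r:ℕ)+2)).prod with hD
  have keyP : ∀ (i : Fin m → Fin N) (x y : UniversalEnvelopingAlgebra ℂ ↥(soL N)),
      (List.ofFn fun k => if k = r then x else if k = r' then y
        else UniversalEnvelopingAlgebra.ι ℂ (soX N (i k) (i (s k)))).prod
        = T i * x * y * Dd i := by
    intro i x y
    rw [hT, hD]
    exact prod_update r r' hr _ x y
  have flip : ∀ (f : Fin m → UniversalEnvelopingAlgebra ℂ ↥(soL N))
      (x y : UniversalEnvelopingAlgebra ℂ ↥(soL N)),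
      (fun k => if k = r' then y else if k = r then x else f k)
        = (fun k => if k = r then x else if k = r' then y else f k) := by
    intro f x y
    funext k
    by_cases h1 : k = r <;> by_cases h2 : k = r' <;>
      simp [h1, h2, hne, hne.symm, Ne.symm hne]
  have hs : wso N s = ∑ i : Fin m → Fin N,
      T i * UniversalEnvelopingAlgebra.ι ℂ (soX N (i r) (i (s r)))
        * UniversalEnvelopingAlgebra.ι ℂ (soX N (i r') (i (s r'))) * Dd i := by
    rw [wso]
    refine Finset.sum_congr rfl fun i _ => ?_
    rw [show (fun k => UniversalEnvelopingAlgebra.ι ℂ (soX N (i k) (i (s k))))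
        = (fun k => if k = r then UniversalEnvelopingAlgebra.ι ℂ (soX N (i r) (i (s r)))
          else if k = r' then UniversalEnvelopingAlgebra.ι ℂ (soX N (i r') (i (s r')))
          else UniversalEnvelopingAlgebra.ι ℂ (soX N (i k) (i (s k)))) from
      funext fun k => by
        by_cases h1 : k = r <;> by_cases h2 : k = r' <;>
          simp [h1, h2, hne, hne.symm, Ne.symm hne],
      keyP]
  have hswap : wso N (Equiv.swap r r' * s * Equiv.swap r r') = ∑ i : Fin m → Fin N,
      T i * UniversalEnvelopingAlgebra.ι ℂ (soX N (i r') (i (s r')))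
        * UniversalEnvelopingAlgebra.ι ℂ (soX N (i r) (i (s r))) * Dd i := by
    rw [wso]
    have step1 : ∑ i : Fin m → Fin N,
        (List.ofFn fun k => if k = r then UniversalEnvelopingAlgebra.ι ℂ
            (soX N (i r') (i (s r')))
          else if k = r' then UniversalEnvelopingAlgebra.ι ℂ (soX N (i r) (i (s r)))
          else UniversalEnvelopingAlgebra.ι ℂ (soX N (i k) (i (s k)))).prod
        = ∑ i : Fin m → Fin N,
        (List.ofFn fun k => UniversalEnvelopingAlgebra.ι ℂ
          (soX N (i k) (i ((Equiv.swap r r' * s * Equiv.swap r r') k)))).prod := by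
      refine Fintype.sum_equiv (Equiv.arrowCongr (Equiv.swap r r') (Equiv.refl (Fin N)))
        _ _ fun i => ?_
      congr 1
      congr 1
      funext k
      have e1 : ∀ j, (Equiv.arrowCongr (Equiv.swap r r') (Equiv.refl (Fin N))) i j
          = i (Equiv.swap r r' j) := by
        intro j
        simp [Equiv.arrowCongr, Equiv.symm_swap]
      have e2 : (Equiv.swap r r' * s * Equiv.swap r r') k
          = Equiv.swap r r' (s (Equiv.swap r r' k)) := rfl
      rw [e2, e1, e1, Equiv.swap_apply_self]
      by_cases h1 : k = r <;> by_cases h2 : k = r'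
      · exact absurd (h1 ▸ h2) hne
      · simp [h1, h2, hne, hne.symm, Ne.symm hne, Equiv.swap_apply_left]
      · simp [h1, h2, hne, hne.symm, Ne.symm hne, Equiv.swap_apply_right]
      · simp [h1, h2, Equiv.swap_apply_of_ne_of_ne]
    rw [← step1]
    exact Finset.sum_congr rfl fun i _ => keyP i _ _
  have hA : (∑ i : Fin m → Fin N,
        if i r' = i (s r) then
          (List.ofFn fun k : Fin m =>
            if k = r' then (1 : UniversalEnvelopingAlgebra ℂ ↥(soL N))
            else if k = r then UniversalEnvelopingAlgebra.ι ℂ (soX N (i r) (i (s r')))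
            else UniversalEnvelopingAlgebra.ι ℂ (soX N (i k) (i (s k)))).prod
        else 0)
      = ∑ i : Fin m → Fin N,
        if i r' = i (s r) then
          T i * UniversalEnvelopingAlgebra.ι ℂ (soX N (i r) (i (s r'))) * 1 * Dd i
        else 0 := by
    refine Finset.sum_congr rfl fun i _ => ?_
    split
    · rw [flip, keyP]
    · rfl
  have hB : (∑ i : Fin m → Fin N,
        if i r = i (s r') then
          (List.ofFn fun k : Fin m =>
            if k = r then (1 : UniversalEnvelopingAlgebra ℂ ↥(soL N))
            else if k = r' then UniversalEnvelopingAlgebra.ι ℂ (soX N (i r') (i (s r)))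
            else UniversalEnvelopingAlgebra.ι ℂ (soX N (i k) (i (s k)))).prod
        else 0)
      = ∑ i : Fin m → Fin N,
        if i r = i (s r') then
          T i * 1 * UniversalEnvelopingAlgebra.ι ℂ (soX N (i r') (i (s r))) * Dd i
        else 0 := by
    refine Finset.sum_congr rfl fun i _ => ?_
    split
    · rw [keyP]
    · rfl
  have hC : (∑ i : Fin m → Fin N,
        if Fin.rev (i (s r')) = i (s r) then
          (List.ofFn fun k : Fin m =>
            if k = r' then (1 : UniversalEnvelopingAlgebra ℂ ↥(soL N))
            else if k = r then
              UniversalEnvelopingAlgebra.ι ℂ (soX N (i r) (Fin.rev (i r')))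
            else UniversalEnvelopingAlgebra.ι ℂ (soX N (i k) (i (s k)))).prod
        else 0)
      = ∑ i : Fin m → Fin N,
        if Fin.rev (i (s r')) = i (s r) then
          T i * UniversalEnvelopingAlgebra.ι ℂ (soX N (i r) (Fin.rev (i r'))) * 1 * Dd i
        else 0 := by
    refine Finset.sum_congr rfl fun i _ => ?_
    split
    · rw [flip, keyP]
    · rfl
  have hD2 : (∑ i : Fin m → Fin N,
        if i r = Fin.rev (i r') then
          (List.ofFn fun k : Fin m =>
            if k = r then (1 : UniversalEnvelopingAlgebra ℂ ↥(soL N))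
            else if k = r' then
              UniversalEnvelopingAlgebra.ι ℂ (soX N (Fin.rev (i (s r'))) (i (s r)))
            else UniversalEnvelopingAlgebra.ι ℂ (soX N (i k) (i (s k)))).prod
        else 0)
      = ∑ i : Fin m → Fin N,
        if i r = Fin.rev (i r') then
          T i * 1 * UniversalEnvelopingAlgebra.ι ℂ (soX N (Fin.rev (i (s r'))) (i (s r)))
            * Dd i
        else 0 := by
    refine Finset.sum_congr rfl fun i _ => ?_
    split
    · rw [keyP]
    · rfl
  rw [hs, hswap, hA, hB, hC, hD2, ← Finset.sum_add_distrib, ← Finset.sum_sub_distrib,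
    ← Finset.sum_sub_distrib, ← Finset.sum_add_distrib]
  refine Finset.sum_congr rfl fun i _ => ?_
  have hb := iota_bracket N (i r) (i (s r)) (i r') (i (s r'))
  have hxy : UniversalEnvelopingAlgebra.ι ℂ (soX N (i r) (i (s r)))
      * UniversalEnvelopingAlgebra.ι ℂ (soX N (i r') (i (s r')))
      = UniversalEnvelopingAlgebra.ι ℂ (soX N (i r') (i (s r')))
        * UniversalEnvelopingAlgebra.ι ℂ (soX N (i r) (i (s r)))
      + ((if i (s r) = i r' then
            UniversalEnvelopingAlgebra.ι ℂ (soX N (i r) (i (s r'))) else 0)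
        - (if i r = i (s r') then
            UniversalEnvelopingAlgebra.ι ℂ (soX N (i r') (i (s r))) else 0)
        - (if i (s r) = Fin.rev (i (s r')) then
            UniversalEnvelopingAlgebra.ι ℂ (soX N (i r) (Fin.rev (i r'))) else 0)
        + (if i r = Fin.rev (i r') then
            UniversalEnvelopingAlgebra.ι ℂ (soX N (Fin.rev (i (s r'))) (i (s r))) else 0)) := by
    rw [← hb]
    abel
  simp only [show (i r' = i (s r)) ↔ (i (s r) = i r') from eq_comm,
    show (Fin.rev (i (s r')) = i (s r)) ↔ (i (s r) = Fin.rev (i (s r'))) from eq_comm]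
  rw [mul_assoc (T i), hxy]
  simp only [mul_add, add_mul, mul_sub, sub_mul, mul_ite, ite_mul, mul_zero, zero_mul,
    mul_one, one_mul, mul_assoc]
  abel

end
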